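/- arXiv:1901.00696 — 7 statements merged into one kernel-verified Lean document; each statement's English description precedes it below -/
import Mathlib

section
/- Let n, m, d be positive integers, let f : ℝⁿ × ℝᵈ → ℝⁿ and h : ℝⁿ × ℝᵈ → ℝᵐ be differentiable in their first argument, let R be an m×m real symmetric positive definite matrix, let (u_t)_{t≥1} be a sequence in ℝᵈ, (y_t)_{t≥1} a sequence in ℝᵐ, (α_t)_{t≥1} nonnegative reals, and (η_t)_{t≥0} reals with 0 < η_t < 1 and 1/η_t = 1/((1+α_t)η_{t−1}) + 1 for all t ≥ 1. Fix s₀ ∈ ℝⁿ and an n×n symmetric positive definite matrix P₀, and define the pure fading-memory extended Kalman filter sequences by: s_{t|t−1} := f(s_{t−1}, u_t); F_{t−1} := the Jacobian of f in its first argument at (s_{t−1}, u_t); P_{t|t−1} := (1+α_t) F_{t−1} P_{t−1} F_{t−1}ᵀ; ŷ_t := h(s_{t|t−1}, u_t); H_t := the Jacobian of h in its first argument at (s_{t|t−1}, u_t); K_t := P_{t|t−1} H_tᵀ (H_t P_{t|t−1} H_tᵀ + R)⁻¹; P_t := (I − K_t H_t) P_{t|t−1}; s_t := s_{t|t−1}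 + K_t (y_t − ŷ_t). Define the online natural gradient sequences by σ₀ := s₀, J₀ := η₀ P₀⁻¹, and for t ≥ 1: σ_{t|t−1} := f(σ_{t−1}, u_t); Φ_{t−1} := the Jacobian of f in its first argument at (σ_{t−1}, u_t); J'_t := (Φ_{t−1}⁻¹)ᵀ J_{t−1} Φ_{t−1}⁻¹; H̃_t := the Jacobian of h in its first argument at (σ_{t|t−1}, u_t); J_t := (1−η_t) J'_t + η_t H̃_tᵀ R⁻¹ H̃_t; σ_t := σ_{t|t−1} + η_t J_t⁻¹ H̃_tᵀ R⁻¹ (y_t − h(σ_{t|t−1}, u_t)). Assume each Jacobian F_{t−1} is invertible. Then for all t ≥ 0: σ_t = s_t, the matrices P_t and J_t are symmetric positive definite (hence invertible), and P_t = η_t J_t⁻¹. -/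
open Matrix

/-- The Jacobian matrix of a map `g : ℝⁿ → ℝᵐ` at a point `x`. -/
noncomputable def jacobian {n m : ℕ} (g : (Fin n → ℝ) → (Fin m → ℝ)) (x : Fin n → ℝ) :
    Matrix (Fin m) (Fin n) ℝ :=
  LinearMap.toMatrix' (fderiv ℝ g x).toLinearMap

lemma smulPosDef {N : ℕ} {c : ℝ} {M : Matrix (Fin N) (Fin N) ℝ} (hc : 0 < c) (hM : M.PosDef) :
    (c • M).PosDef := by
  refine PosDef.of_dotProduct_mulVec_pos (by unfold Matrix.IsHermitian at *; rw [conjTranspose_smul, hM.1]; simp) fun x hx => ?_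
  rw [smul_mulVec, dotProduct_smul]
  exact mul_pos hc (hM.dotProduct_mulVec_pos hx)

lemma conjPosDef {N : ℕ} {P F : Matrix (Fin N) (Fin N) ℝ} (hP : P.PosDef) (hF : IsUnit F) :
    (F * P * Fᵀ).PosDef := by
  have hFt : Fᵀ = Fᴴ := rfl
  refine PosDef.of_dotProduct_mulVec_pos (by rw [hFt]; exact (hP.posSemidef.mul_mul_conjTranspose_same F).1) fun x hx => ?_
  have hx' : Fᵀ *ᵥ x ≠ 0 := by
    have hi : Function.Injective (Fᵀ.mulVec) :=
      mulVec_injective_iff_isUnit.mpr ((isUnit_transpose F).mpr hF)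
    intro hcon
    apply hx
    exact hi (a₁ := x) (a₂ := 0) (by simpa using hcon)
  have := hP.dotProduct_mulVec_pos hx'
  simpa only [star_mulVec, dotProduct_mulVec, vecMul_vecMul, hFt, conjTranspose_conjTranspose]
    using this

lemma smulInv {N : ℕ} {c : ℝ} (hc : c ≠ 0) {M : Matrix (Fin N) (Fin N) ℝ}
    (hM : IsUnit M.det) : (c • M)⁻¹ = c⁻¹ • M⁻¹ := by
  apply Matrix.inv_eq_right_inv
  rw [Matrix.smul_mul, Matrix.mul_smul, Matrix.mul_nonsing_inv _ hM, smul_smul,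
    mul_inv_cancel₀ hc, one_smul]

lemma keyLemma {N M : ℕ} {Pp : Matrix (Fin N) (Fin N) ℝ} (hPp : Pp.PosDef)
    (H : Matrix (Fin M) (Fin N) ℝ) {R : Matrix (Fin M) (Fin M) ℝ} (hR : R.PosDef) :
    (Pp⁻¹ + Hᵀ * R⁻¹ * H).PosDef ∧
    (1 - Pp * Hᵀ * (H * Pp * Hᵀ + R)⁻¹ * H) * Pp = (Pp⁻¹ + Hᵀ * R⁻¹ * H)⁻¹ ∧
    (Pp⁻¹ + Hᵀ * R⁻¹ * H)⁻¹ * Hᵀ * R⁻¹ = Pp * Hᵀ * (H * Pp * Hᵀ + R)⁻¹ := by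
  set S : Matrix (Fin M) (Fin M) ℝ := H * Pp * Hᵀ + R with hSdef
  set A : Matrix (Fin N) (Fin N) ℝ := Pp⁻¹ + Hᵀ * R⁻¹ * H with hAdef
  have hA : A.PosDef :=
    hPp.inv.add_posSemidef (hR.inv.posSemidef.conjTranspose_mul_mul_same H)
  have hS : S.PosDef :=
    Matrix.PosDef.posSemidef_add (hPp.posSemidef.mul_mul_conjTranspose_same H) hR
  have hPd : IsUnit Pp.det := (isUnit_iff_isUnit_det _).mp hPp.isUnit
  have hRd : IsUnit R.det := (isUnit_iff_isUnit_det _).mp hR.isUnit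
  have hSd : IsUnit S.det := (isUnit_iff_isUnit_det _).mp hS.isUnit
  have hAd : IsUnit A.det := (isUnit_iff_isUnit_det _).mp hA.isUnit
  have e1 : A * Pp = 1 + Hᵀ * (R⁻¹ * (H * Pp)) := by
    rw [hAdef, Matrix.add_mul, nonsing_inv_mul _ hPd]
    simp only [Matrix.mul_assoc]
  have e3 : A * (Pp * (Hᵀ * S⁻¹)) = Hᵀ * R⁻¹ := by
    have hr : Hᵀ * R⁻¹ = Hᵀ * (R⁻¹ * (S * S⁻¹)) := by
      rw [mul_nonsing_inv _ hSd, mul_one]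
    rw [hr, hAdef, hSdef]
    simp only [Matrix.add_mul, Matrix.mul_add, Matrix.mul_assoc,
      nonsing_inv_mul_cancel_left _ _ hPd, nonsing_inv_mul_cancel_left _ _ hRd]
    abel
  have hmain : A * ((1 - Pp * Hᵀ * S⁻¹ * H) * Pp) = 1 := by
    have step : A * ((1 - Pp * Hᵀ * S⁻¹ * H) * Pp)
        = A * Pp - A * (Pp * (Hᵀ * S⁻¹)) * (H * Pp) := by
      simp only [Matrix.sub_mul, Matrix.mul_sub, Matrix.one_mul, Matrix.mul_assoc]
    rw [step, e3, e1]
    simp only [Matrix.mul_assoc]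
    abel
  refine ⟨hA, (inv_eq_right_inv hmain).symm, ?_⟩
  have h4 : Pp * (Hᵀ * S⁻¹) = A⁻¹ * (Hᵀ * R⁻¹) := by
    rw [← e3, nonsing_inv_mul_cancel_left _ _ hAd]
  rw [Matrix.mul_assoc, ← h4]
  simp only [Matrix.mul_assoc]

/-- The pure fading-memory extended Kalman filter coincides with the online natural
gradient on trajectory space (expressed at each time in the chart of the current state),
for the Gaussian observation model `y_t = h(s_t, u_t) + N(0, R)`. -/
theorem ekf_is_natural_gradient_in_trajectory_space
    (n m d : ℕ) (hn : 0 < n) (hm : 0 < m) (hd : 0 < d)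
    (f : (Fin n → ℝ) → (Fin d → ℝ) → (Fin n → ℝ))
    (h : (Fin n → ℝ) → (Fin d → ℝ) → (Fin m → ℝ))
    (hf : ∀ u, Differentiable ℝ (fun s => f s u))
    (hh : ∀ u, Differentiable ℝ (fun s => h s u))
    (R : Matrix (Fin m) (Fin m) ℝ) (hR : R.PosDef)
    (u : ℕ → (Fin d → ℝ)) (y : ℕ → (Fin m → ℝ))
    (α : ℕ → ℝ) (hα : ∀ t, 0 ≤ α (t + 1))
    (η : ℕ → ℝ) (hη0 : ∀ t, 0 < η t) (hη1 : ∀ t, η t < 1)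
    (hηrec : ∀ t, 1 / η (t + 1) = 1 / ((1 + α (t + 1)) * η t) + 1)
    -- the pure fading-memory extended Kalman filter sequences
    (s : ℕ → (Fin n → ℝ)) (P : ℕ → Matrix (Fin n) (Fin n) ℝ)
    (spred : ℕ → (Fin n → ℝ)) (F : ℕ → Matrix (Fin n) (Fin n) ℝ)
    (Ppred : ℕ → Matrix (Fin n) (Fin n) ℝ) (yhat : ℕ → (Fin m → ℝ))
    (H : ℕ → Matrix (Fin m) (Fin n) ℝ) (K : ℕ → Matrix (Fin n) (Fin m) ℝ)
    (hP0 : (P 0).PosDef)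
    (hspred : ∀ t, spred (t + 1) = f (s t) (u (t + 1)))
    (hF : ∀ t, F t = jacobian (fun x => f x (u (t + 1))) (s t))
    (hPpred : ∀ t, Ppred (t + 1) = (1 + α (t + 1)) • (F t * P t * (F t)ᵀ))
    (hyhat : ∀ t, yhat (t + 1) = h (spred (t + 1)) (u (t + 1)))
    (hH : ∀ t, H (t + 1) = jacobian (fun x => h x (u (t + 1))) (spred (t + 1)))
    (hK : ∀ t, K (t + 1) =
      Ppred (t + 1) * (H (t + 1))ᵀ * (H (t + 1) * Ppred (t + 1) * (H (t + 1))ᵀ + R)⁻¹)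
    (hPrec : ∀ t, P (t + 1) = (1 - K (t + 1) * H (t + 1)) * Ppred (t + 1))
    (hsrec : ∀ t, s (t + 1) = spred (t + 1) + (K (t + 1)).mulVec (y (t + 1) - yhat (t + 1)))
    -- the online natural gradient sequences
    (σ : ℕ → (Fin n → ℝ)) (J : ℕ → Matrix (Fin n) (Fin n) ℝ)
    (σpred : ℕ → (Fin n → ℝ)) (Φ : ℕ → Matrix (Fin n) (Fin n) ℝ)
    (Htil : ℕ → Matrix (Fin m) (Fin n) ℝ)
    (hσ0 : σ 0 = s 0) (hJ0 : J 0 = η 0 • (P 0)⁻¹)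
    (hσpred : ∀ t, σpred (t + 1) = f (σ t) (u (t + 1)))
    (hΦ : ∀ t, Φ t = jacobian (fun x => f x (u (t + 1))) (σ t))
    (hHtil : ∀ t, Htil (t + 1) = jacobian (fun x => h x (u (t + 1))) (σpred (t + 1)))
    (hJrec : ∀ t, J (t + 1) =
      (1 - η (t + 1)) • (((Φ t)⁻¹)ᵀ * J t * (Φ t)⁻¹)
        + η (t + 1) • ((Htil (t + 1))ᵀ * R⁻¹ * Htil (t + 1)))
    (hσrec : ∀ t, σ (t + 1) = σpred (t + 1) +
      η (t + 1) • ((J (t + 1))⁻¹ * (Htil (t + 1))ᵀ * R⁻¹).mulVec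
        (y (t + 1) - h (σpred (t + 1)) (u (t + 1))))
    -- invertibility of the transition Jacobians
    (hFinv : ∀ t, IsUnit (F t)) (hΦinv : ∀ t, IsUnit (Φ t)) :
    ∀ t, σ t = s t ∧ (P t).PosDef ∧ (J t).PosDef ∧
      IsUnit (P t) ∧ IsUnit (J t) ∧ P t = η t • (J t)⁻¹ := by
  intro t
  induction t with
  | zero =>
    have hPdet : IsUnit (P 0).det := (isUnit_iff_isUnit_det _).mp hP0.isUnit
    have hJ0pos : (J 0).PosDef := by
      rw [hJ0]; exact smulPosDef (hη0 0) hP0.inv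
    refine ⟨hσ0, hP0, hJ0pos, hP0.isUnit, hJ0pos.isUnit, ?_⟩
    rw [hJ0, smulInv (hη0 0).ne' ((isUnit_iff_isUnit_det _).mp hP0.inv.isUnit),
      nonsing_inv_nonsing_inv _ hPdet, smul_smul, mul_inv_cancel₀ (hη0 0).ne', one_smul]
  | succ t ih =>
    obtain ⟨hσs, hPpos, hJpos, -, -, hPJ⟩ := ih
    have hc : 0 < 1 + α (t + 1) := by have := hα t; linarith
    have hηt := hη0 t
    have hη' := hη0 (t + 1)
    -- scalar identity
    have hsc : (1 - η (t + 1)) * (η t * (1 + α (t + 1))) = η (t + 1) := by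
      have hrec := hηrec t
      have h1 : η t ≠ 0 := hηt.ne'
      have h2 : η (t + 1) ≠ 0 := hη'.ne'
      have h3 : (1 : ℝ) + α (t + 1) ≠ 0 := hc.ne'
      field_simp at hrec
      nlinarith [hrec]
    -- equality of the filters' ingredients
    have hΦF : Φ t = F t := by rw [hΦ t, hF t, hσs]
    have hpred : σpred (t + 1) = spred (t + 1) := by rw [hσpred t, hspred t, hσs]
    have hHeq : Htil (t + 1) = H (t + 1) := by rw [hHtil t, hH t, hpred]
    -- J t in terms of P t
    have hJdet : IsUnit (J t).det := (isUnit_iff_isUnit_det _).mp hJpos.isUnit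
    have hJP : J t = η t • (P t)⁻¹ := by
      rw [hPJ, smulInv (hη0 t).ne' ((isUnit_iff_isUnit_det _).mp hJpos.inv.isUnit),
        nonsing_inv_nonsing_inv _ hJdet, smul_smul, mul_inv_cancel₀ (hη0 t).ne', one_smul]
    -- the predicted covariance
    have hFPF : (F t * P t * (F t)ᵀ).PosDef := conjPosDef hPpos (hFinv t)
    have hFPFdet : IsUnit (F t * P t * (F t)ᵀ).det := (isUnit_iff_isUnit_det _).mp hFPF.isUnit
    have hPpredPos : (Ppred (t + 1)).PosDef := by
      rw [hPpred t]; exact smulPosDef hc hFPF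
    have hPpinv : (Ppred (t + 1))⁻¹ = (1 + α (t + 1))⁻¹ • (F t * P t * (F t)ᵀ)⁻¹ := by
      rw [hPpred t, smulInv hc.ne' hFPFdet]
    have key1 : ((F t)⁻¹)ᵀ * (P t)⁻¹ * (F t)⁻¹ = (F t * P t * (F t)ᵀ)⁻¹ := by
      rw [Matrix.mul_inv_rev, Matrix.mul_inv_rev, ← Matrix.transpose_nonsing_inv,
        ← Matrix.mul_assoc]
    -- the J recursion in information form
    have hJ1 : J (t + 1)
        = η (t + 1) • ((Ppred (t + 1))⁻¹ + (H (t + 1))ᵀ * R⁻¹ * H (t + 1)) := by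
      rw [hJrec t, hΦF, hHeq, hJP, Matrix.mul_smul, Matrix.smul_mul, key1, smul_add,
        hPpinv, smul_smul, smul_smul]
      have hscal : (1 - η (t + 1)) * η t = η (t + 1) * (1 + α (t + 1))⁻¹ := by
        field_simp
        nlinarith [hsc]
      rw [hscal]
    obtain ⟨hApos, hPeq, hKeq⟩ := keyLemma hPpredPos (H (t + 1)) hR
    have hAdet : IsUnit ((Ppred (t + 1))⁻¹ + (H (t + 1))ᵀ * R⁻¹ * H (t + 1)).det :=
      (isUnit_iff_isUnit_det _).mp hApos.isUnit
    have hPA : P (t + 1) = ((Ppred (t + 1))⁻¹ + (H (t + 1))ᵀ * R⁻¹ * H (t + 1))⁻¹ := by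
      rw [hPrec t, hK t]; exact hPeq
    have hJ1pos : (J (t + 1)).PosDef := by rw [hJ1]; exact smulPosDef hη' hApos
    have hJinv : η (t + 1) • (J (t + 1))⁻¹
        = ((Ppred (t + 1))⁻¹ + (H (t + 1))ᵀ * R⁻¹ * H (t + 1))⁻¹ := by
      rw [hJ1, smulInv hη'.ne' hAdet, smul_smul, mul_inv_cancel₀ hη'.ne', one_smul]
    have hPpos' : (P (t + 1)).PosDef := by rw [hPA]; exact hApos.inv
    have hσfinal : σ (t + 1) = s (t + 1) := by
      rw [hσrec t, hsrec t, hpred, hHeq, hyhat t, ← smul_mulVec,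
        ← Matrix.smul_mul, ← Matrix.smul_mul, hJinv, hKeq, hK t]
    exact ⟨hσfinal, hPpos', hJ1pos, hPpos'.isUnit, hJ1pos.isUnit, by rw [hPA, ← hJinv]⟩
end

section
/- Let n, m, d be positive integers, f : ℝⁿ × ℝᵈ → ℝⁿ and h : ℝⁿ × ℝᵈ → ℝᵐ differentiable in their first argument, R an m×m symmetric positive definite matrix, u ∈ ℝᵈ, y ∈ ℝᵐ, α ≥ 0, and η_prev, η reals with 0 < η < 1, η_prev > 0, and 1/η = 1/((1+α)η_prev) + 1. Let s ∈ ℝⁿ and let P be an n×n symmetric positive definite matrix, and set J := η_prev P⁻¹. Define one step of the pure fading-memory extended Kalman filter: s_pred := f(s, u); F := the Jacobian of f in its first argument at (s, u), assumed invertible; P_pred := (1+α) F P Fᵀ; ŷ := h(s_pred, u); H := the Jacobian of h in its first argument at (s_pred, u); K := P_pred Hᵀ (H P_pred Hᵀ + R)⁻¹; P₊ := (I − K H) P_pred; s₊ := s_pred + K (y − ŷ). Define one step of the online natural gradient: J' := (F⁻¹)ᵀ J F⁻¹; J₊ := (1−η) J' + η Hᵀ R⁻¹ H; σ₊ := s_pred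 + η J₊⁻¹ Hᵀ R⁻¹ (y − ŷ). Then J₊ is symmetric positive definite, P₊ = η J₊⁻¹, and s₊ = σ₊. -/
open Matrix

lemma posDef_smul_of_pos {k : ℕ} {M : Matrix (Fin k) (Fin k) ℝ} (hM : M.PosDef)
    {c : ℝ} (hc : 0 < c) : (c • M).PosDef := by
  have ht : Mᵀ = M := (conjTranspose_eq_transpose_of_trivial M).symm.trans hM.1.eq
  refine posDef_iff_dotProduct_mulVec.mpr ⟨?_, fun x hx => ?_⟩
  · unfold Matrix.IsHermitian
    simp [conjTranspose_smul, ht]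
  · rw [smul_mulVec, dotProduct_smul, smul_eq_mul]
    exact mul_pos hc (hM.dotProduct_mulVec_pos hx)

lemma posDef_mul_mul_transpose {k : ℕ} {B M : Matrix (Fin k) (Fin k) ℝ}
    (hM : M.PosDef) (hB : IsUnit B) : (B * M * Bᵀ).PosDef := by
  have hBt : Bᵀ = Bᴴ := (conjTranspose_eq_transpose_of_trivial B).symm
  have hBH : IsUnit Bᴴ := by
    rw [← hBt, Matrix.isUnit_iff_isUnit_det, Matrix.det_transpose,
      ← Matrix.isUnit_iff_isUnit_det]; exact hB
  refine posDef_iff_dotProduct_mulVec.mpr ⟨?_, fun x hx => ?_⟩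
  · rw [hBt]; exact isHermitian_mul_mul_conjTranspose _ hM.1
  · have hinj := Matrix.mulVec_injective_iff_isUnit.mpr hBH
    have hxne : Bᴴ *ᵥ x ≠ 0 := (hinj.ne_iff' (Matrix.mulVec_zero _)).2 hx
    have := hM.dotProduct_mulVec_pos hxne
    rw [hBt]
    simpa only [star_mulVec, dotProduct_mulVec, vecMul_vecMul,
      conjTranspose_conjTranspose] using this

/-- One step of the pure fading-memory extended Kalman filter coincides with one step of
the online natural gradient in the chart of the current state, for the Gaussian
observation model `y = h(s, u) + N(0, R)`. -/
theorem ekf_step_is_natural_gradient_step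
    (n m d : ℕ) (hn : 0 < n) (hm : 0 < m) (hd : 0 < d)
    (f : (Fin n → ℝ) → (Fin d → ℝ) → (Fin n → ℝ))
    (h : (Fin n → ℝ) → (Fin d → ℝ) → (Fin m → ℝ))
    (hf : ∀ u, Differentiable ℝ (fun s => f s u))
    (hh : ∀ u, Differentiable ℝ (fun s => h s u))
    (R : Matrix (Fin m) (Fin m) ℝ) (hR : R.PosDef)
    (u : Fin d → ℝ) (y : Fin m → ℝ)
    (α : ℝ) (hα : 0 ≤ α)
    (ηprev η : ℝ) (hηprev : 0 < ηprev) (hη0 : 0 < η) (hη1 : η < 1)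
    (hηrec : 1 / η = 1 / ((1 + α) * ηprev) + 1)
    (s : Fin n → ℝ) (P : Matrix (Fin n) (Fin n) ℝ) (hP : P.PosDef)
    (J : Matrix (Fin n) (Fin n) ℝ) (hJ : J = ηprev • P⁻¹)
    -- one step of the pure fading-memory extended Kalman filter
    (spred : Fin n → ℝ) (hspred : spred = f s u)
    (F : Matrix (Fin n) (Fin n) ℝ) (hF : F = jacobian (fun x => f x u) s)
    (hFinv : IsUnit F)
    (Ppred : Matrix (Fin n) (Fin n) ℝ) (hPpred : Ppred = (1 + α) • (F * P * Fᵀ))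
    (yhat : Fin m → ℝ) (hyhat : yhat = h spred u)
    (H : Matrix (Fin m) (Fin n) ℝ) (hH : H = jacobian (fun x => h x u) spred)
    (K : Matrix (Fin n) (Fin m) ℝ) (hK : K = Ppred * Hᵀ * (H * Ppred * Hᵀ + R)⁻¹)
    (Pplus : Matrix (Fin n) (Fin n) ℝ) (hPplus : Pplus = (1 - K * H) * Ppred)
    (splus : Fin n → ℝ) (hsplus : splus = spred + K.mulVec (y - yhat))
    -- one step of the online natural gradient
    (J' : Matrix (Fin n) (Fin n) ℝ) (hJ' : J' = (F⁻¹)ᵀ * J * F⁻¹)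
    (Jplus : Matrix (Fin n) (Fin n) ℝ)
    (hJplus : Jplus = (1 - η) • J' + η • (Hᵀ * R⁻¹ * H))
    (σplus : Fin n → ℝ)
    (hσplus : σplus = spred + η • (Jplus⁻¹ * Hᵀ * R⁻¹).mulVec (y - yhat)) :
    Jplus.PosDef ∧ Pplus = η • Jplus⁻¹ ∧ splus = σplus := by
  have hc : (0:ℝ) < 1 + α := by linarith
  have hMpd : (F * P * Fᵀ).PosDef := posDef_mul_mul_transpose hP hFinv
  have hPpredPD : Ppred.PosDef := hPpred ▸ posDef_smul_of_pos hMpd hc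
  have hPpredUnit : IsUnit Ppred.det := (Matrix.isUnit_iff_isUnit_det _).mp hPpredPD.isUnit
  have hRunit : IsUnit R.det := (Matrix.isUnit_iff_isUnit_det _).mp hR.isUnit
  have hA : (Hᵀ * R⁻¹ * H).PosSemidef := by
    have := hR.inv.posSemidef.conjTranspose_mul_mul_same H
    simpa [conjTranspose_eq_transpose_of_trivial] using this
  -- scalar identity
  have hcη : (1 - η) * ηprev = η * (1 + α)⁻¹ := by
    have h1 : (1+α) * ηprev ≠ 0 := by positivity
    field_simp at hηrec ⊢
    nlinarith [hηrec]
  -- inverse computations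
  have hFdet : IsUnit F.det := (Matrix.isUnit_iff_isUnit_det F).mp hFinv
  have hMinv : (F * P * Fᵀ)⁻¹ = (F⁻¹)ᵀ * P⁻¹ * F⁻¹ := by
    rw [Matrix.mul_inv_rev, Matrix.mul_inv_rev, Matrix.transpose_nonsing_inv, mul_assoc]
  have hMdet : IsUnit (F * P * Fᵀ).det := (Matrix.isUnit_iff_isUnit_det _).mp hMpd.isUnit
  have hPpredInv : Ppred⁻¹ = (1+α)⁻¹ • (F * P * Fᵀ)⁻¹ := by
    have hone : ((1+α)⁻¹ • (F * P * Fᵀ)⁻¹) * ((1+α) • (F * P * Fᵀ)) = 1 := by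
      rw [Matrix.smul_mul, Matrix.mul_smul, smul_smul, inv_mul_cancel₀ hc.ne', one_smul,
        Matrix.nonsing_inv_mul _ hMdet]
    rw [hPpred]
    exact Matrix.inv_eq_left_inv hone
  have hJ'eq : J' = ηprev • (F * P * Fᵀ)⁻¹ := by
    rw [hJ', hJ, hMinv, Matrix.mul_smul, Matrix.smul_mul]
  have hJplus_eq : Jplus = η • (Ppred⁻¹ + Hᵀ * R⁻¹ * H) := by
    rw [hJplus, hJ'eq, hPpredInv, smul_add, smul_smul, smul_smul, hcη]
  have hSum : (Ppred⁻¹ + Hᵀ * R⁻¹ * H).PosDef := hPpredPD.inv.add_posSemidef hA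
  have hJplusPD : Jplus.PosDef := hJplus_eq ▸ posDef_smul_of_pos hSum hη0
  -- the key Kalman gain identity
  have hS : (H * Ppred * Hᵀ + R).PosDef := by
    refine Matrix.PosDef.posSemidef_add ?_ hR
    have := hPpredPD.posSemidef.mul_mul_conjTranspose_same H
    simpa [conjTranspose_eq_transpose_of_trivial] using this
  have hSunit : IsUnit (H * Ppred * Hᵀ + R).det :=
    (Matrix.isUnit_iff_isUnit_det _).mp hS.isUnit
  have hKS : K * (H * Ppred * Hᵀ + R) = Ppred * Hᵀ := by
    rw [hK, Matrix.mul_assoc, Matrix.nonsing_inv_mul _ hSunit, Matrix.mul_one]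
  have hkey : (1 - K * H) * Ppred * Hᵀ * R⁻¹ = K := by
    have hKH : K * H * (Ppred * Hᵀ) = Ppred * Hᵀ - K * R := by
      rw [Matrix.mul_assoc, ← Matrix.mul_assoc H, eq_sub_iff_add_eq, ← Matrix.mul_add, hKS]
    have hk0 : (1 - K * H) * (Ppred * Hᵀ) = K * R := by
      rw [Matrix.sub_mul, Matrix.one_mul, hKH, sub_sub_cancel]
    calc (1 - K * H) * Ppred * Hᵀ * R⁻¹
        = ((1 - K * H) * (Ppred * Hᵀ)) * R⁻¹ := by simp only [Matrix.mul_assoc]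
      _ = K * R * R⁻¹ := by rw [hk0]
      _ = K := by rw [Matrix.mul_assoc, Matrix.mul_nonsing_inv _ hRunit, Matrix.mul_one]
  have hPJ : Pplus * (Ppred⁻¹ + Hᵀ * R⁻¹ * H) = 1 := by
    have h1 : Pplus * Ppred⁻¹ = 1 - K * H := by
      rw [hPplus, Matrix.mul_assoc, Matrix.mul_nonsing_inv _ hPpredUnit, Matrix.mul_one]
    have h2 : Pplus * (Hᵀ * R⁻¹ * H) = K * H := by
      have e : Pplus * (Hᵀ * R⁻¹ * H) = ((1 - K * H) * Ppred * Hᵀ * R⁻¹) * H := by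
        rw [hPplus]; simp only [Matrix.mul_assoc]
      rw [e, hkey]
    rw [Matrix.mul_add, h1, h2, sub_add_cancel]
  have h5 : (η⁻¹ • Pplus) * Jplus = 1 := by
    rw [hJplus_eq, Matrix.smul_mul, Matrix.mul_smul, smul_smul, hPJ,
      inv_mul_cancel₀ hη0.ne', one_smul]
  have hJplusInv : Jplus⁻¹ = η⁻¹ • Pplus := Matrix.inv_eq_left_inv h5
  have hPeq : Pplus = η • Jplus⁻¹ := by
    rw [hJplusInv, smul_smul, mul_inv_cancel₀ hη0.ne', one_smul]
  refine ⟨hJplusPD, hPeq, ?_⟩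
  have hKeq : K = η • (Jplus⁻¹ * Hᵀ * R⁻¹) := by
    rw [hJplusInv, Matrix.smul_mul, Matrix.smul_mul, smul_smul,
      mul_inv_cancel₀ hη0.ne', one_smul, hPplus]
    exact hkey.symm
  rw [hsplus, hσplus, ← Matrix.smul_mulVec, ← hKeq]
end

section
/- Let h : ℝⁿ → ℝᵐ be differentiable at s₀ ∈ ℝⁿ with Jacobian H at s₀, let R be an m×m real symmetric positive definite matrix, y ∈ ℝᵐ, and let P be an n×n real symmetric positive definite matrix. Define ℓ : ℝⁿ → ℝ by ℓ(s) := −(1/2) (y − h(s))ᵀ R⁻¹ (y − h(s)), define K := P Hᵀ (H P Hᵀ + R)⁻¹ and P₊ := (I − K H) P. Then ℓ is differentiable at s₀ with gradient (as a column vector) equal to Hᵀ R⁻¹ (y − h(s₀)), and the Kalman state update satisfies s₀ + K (y − h(s₀)) = s₀ + P₊ ∇ℓ(s₀). -/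
open Matrix

/-- The Kalman observation update of the state is a gradient ascent step on the
observation log-likelihood `ℓ(s) = -(1/2)(y - h(s))ᵀ R⁻¹ (y - h(s))`, preconditioned by
the posterior covariance matrix `P₊ = (I - K H) P`. -/
theorem kalman_update_is_preconditioned_gradient_step
    (n m : ℕ) (h : (Fin n → ℝ) → (Fin m → ℝ)) (s₀ : Fin n → ℝ)
    (H : Matrix (Fin m) (Fin n) ℝ)
    (hh : HasFDerivAt h (LinearMap.toContinuousLinearMap H.mulVecLin) s₀)
    (R : Matrix (Fin m) (Fin m) ℝ) (hR : R.PosDef)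
    (y : Fin m → ℝ)
    (P : Matrix (Fin n) (Fin n) ℝ) (hP : P.PosDef)
    (ℓ : (Fin n → ℝ) → ℝ)
    (hℓ : ℓ = fun s => -(1 / 2) * ((y - h s) ⬝ᵥ R⁻¹.mulVec (y - h s)))
    (K : Matrix (Fin n) (Fin m) ℝ) (hK : K = P * Hᵀ * (H * P * Hᵀ + R)⁻¹)
    (Pplus : Matrix (Fin n) (Fin n) ℝ) (hPplus : Pplus = (1 - K * H) * P) :
    DifferentiableAt ℝ ℓ s₀ ∧
      (∀ v, fderiv ℝ ℓ s₀ v = ((Hᵀ * R⁻¹).mulVec (y - h s₀)) ⬝ᵥ v) ∧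
      s₀ + K.mulVec (y - h s₀) = s₀ + Pplus.mulVec ((Hᵀ * R⁻¹).mulVec (y - h s₀)) := by
  -- R⁻¹ is symmetric
  have hRinvT : R⁻¹ᵀ = R⁻¹ := by
    rw [transpose_nonsing_inv]
    congr 1
    have := hR.1
    rwa [IsHermitian, conjTranspose_eq_transpose_of_trivial] at this
  -- the bilinear form as a continuous bilinear map
  let L₁ : (Fin m → ℝ) →ₗ[ℝ] (Fin m → ℝ) →ₗ[ℝ] ℝ :=
    LinearMap.mk₂ ℝ (fun u v => u ⬝ᵥ R⁻¹.mulVec v)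
    (fun u u' v => by simp [add_dotProduct])
    (fun c u v => by simp [smul_dotProduct])
    (fun u v v' => by simp [mulVec_add, dotProduct_add])
    (fun c u v => by simp [mulVec_smul, dotProduct_smul])
  let L : (Fin m → ℝ) →L[ℝ] (Fin m → ℝ) →L[ℝ] ℝ := LinearMap.toContinuousLinearMap
    ((LinearMap.toContinuousLinearMap :
        ((Fin m → ℝ) →ₗ[ℝ] ℝ) ≃ₗ[ℝ] ((Fin m → ℝ) →L[ℝ] ℝ)).toLinearMap ∘ₗ L₁)
  have hLapp : ∀ u v, L u v = u ⬝ᵥ R⁻¹.mulVec v := fun u v => rfl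
  have hb : IsBoundedBilinearMap ℝ (fun p : (Fin m → ℝ) × (Fin m → ℝ) => L p.1 p.2) :=
    L.isBoundedBilinearMap
  -- derivative of g = y - h
  set D := LinearMap.toContinuousLinearMap H.mulVecLin with hD
  have hg : HasFDerivAt (fun s => y - h s) (-D) s₀ := hh.const_sub y
  set r := y - h s₀ with hr
  -- derivative of ℓ
  have hF : HasFDerivAt (fun s => L (y - h s) (y - h s))
      ((hb.deriv (r, r)).comp ((-D).prod (-D))) s₀ :=
    by have := (hb.hasFDerivAt (r, r)).comp s₀ (HasFDerivAt.prodMk hg hg); exact this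
  have hℓ' : HasFDerivAt ℓ ((-(1 / 2) : ℝ) • ((hb.deriv (r, r)).comp ((-D).prod (-D)))) s₀ := by
    rw [hℓ]
    exact hF.const_mul _
  have hdiff : DifferentiableAt ℝ ℓ s₀ := hℓ'.differentiableAt
  have hDv : ∀ v, D v = H.mulVec v := fun v => rfl
  have key : ∀ v : Fin n → ℝ, (H.mulVec v) ⬝ᵥ R⁻¹.mulVec r = r ⬝ᵥ R⁻¹.mulVec (H.mulVec v) := by
    intro v
    rw [dotProduct_mulVec, ← mulVec_transpose, hRinvT, dotProduct_comm]
  have key2 : ∀ v : Fin n → ℝ,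
      ((Hᵀ * R⁻¹).mulVec r) ⬝ᵥ v = r ⬝ᵥ R⁻¹.mulVec (H.mulVec v) := by
    intro v
    rw [dotProduct_comm, dotProduct_mulVec, ← mulVec_transpose, transpose_mul,
      transpose_transpose, hRinvT, ← mulVec_mulVec, dotProduct_comm,
      dotProduct_mulVec, ← mulVec_transpose, hRinvT]
  refine ⟨hdiff, ?_, ?_⟩
  · intro v
    rw [hℓ'.fderiv]
    have step : ((-(1 / 2) : ℝ) • ((hb.deriv (r, r)).comp ((-D).prod (-D)))) v
        = -(1 / 2) * (L r (-(D v)) + L (-(D v)) r) := by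
      simp only [ContinuousLinearMap.smul_apply, ContinuousLinearMap.comp_apply,
        ContinuousLinearMap.prod_apply, ContinuousLinearMap.neg_apply, smul_eq_mul]
      rw [hb.deriv_apply]
    rw [step, key2, hLapp, hLapp, hDv]
    simp only [mulVec_neg, dotProduct_neg, neg_dotProduct]
    rw [key]
    ring
  · -- the matrix identity
    have hS : (H * P * Hᵀ + R).PosDef := by
      have h1 : (H * P * Hᵀ).PosSemidef := by
        have := hP.posSemidef.mul_mul_conjTranspose_same H
        rwa [conjTranspose_eq_transpose_of_trivial] at this
      exact Matrix.PosDef.posSemidef_add h1 hR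
    have hKS : K * (H * P * Hᵀ + R) = P * Hᵀ := by
      rw [hK, Matrix.mul_assoc (P * Hᵀ),
        nonsing_inv_mul _ ((isUnit_iff_isUnit_det _).1 hS.isUnit), Matrix.mul_one]
    have h2 : K * (H * P * Hᵀ) + K * R = P * Hᵀ := by rw [← Matrix.mul_add]; exact hKS
    have hKR : K * R = P * Hᵀ - K * (H * P * Hᵀ) := eq_sub_of_add_eq' h2
    have e1 : (1 - K * H) * P * Hᵀ = K * R := by
      rw [sub_mul, one_mul, Matrix.sub_mul, Matrix.mul_assoc K H P,
        Matrix.mul_assoc K (H * P) Hᵀ]; exact hKR.symm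
    have hKeq : K = Pplus * (Hᵀ * R⁻¹) := by
      have e2 : Pplus * (Hᵀ * R⁻¹) = ((1 - K * H) * P * Hᵀ) * R⁻¹ := by
        rw [hPplus, ← Matrix.mul_assoc]
      rw [e2, e1, Matrix.mul_assoc,
        mul_nonsing_inv _ ((isUnit_iff_isUnit_det _).1 hR.isUnit), Matrix.mul_one]
    rw [hKeq, ← mulVec_mulVec]
end

section
/- Let P be an n×n real symmetric positive definite matrix, R an m×m real symmetric positive definite matrix, and H an m×n real matrix. Set K := P Hᵀ (H P Hᵀ + R)⁻¹. Then the matrix (I − K H) P is symmetric positive definite. -/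
open Matrix

/-- The Kalman observation update preserves positive definiteness of the covariance:
the posterior covariance `(I - K H) P` is symmetric positive definite. -/
theorem kalman_posterior_covariance_posDef
    (n m : ℕ) (P : Matrix (Fin n) (Fin n) ℝ) (hP : P.PosDef)
    (R : Matrix (Fin m) (Fin m) ℝ) (hR : R.PosDef)
    (H : Matrix (Fin m) (Fin n) ℝ)
    (K : Matrix (Fin n) (Fin m) ℝ) (hK : K = P * Hᵀ * (H * P * Hᵀ + R)⁻¹) :
    ((1 - K * H) * P).PosDef := by
  have hHc : Hᴴ = Hᵀ := by ext i j; simp [Matrix.conjTranspose]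
  have hHtc : (Hᵀ)ᴴ = H := by ext i j; simp [Matrix.conjTranspose]
  set S : Matrix (Fin m) (Fin m) ℝ := H * P * Hᵀ + R with hS
  have hSpd : S.PosDef := by
    have h1 : (H * P * Hᵀ).PosSemidef := by
      have := hP.posSemidef.mul_mul_conjTranspose_same H
      rwa [hHc] at this
    exact Matrix.PosDef.posSemidef_add h1 hR
  have hN : (P⁻¹ + Hᵀ * R⁻¹ * H).PosDef := by
    refine hP.inv.add_posSemidef ?_
    have := hR.inv.posSemidef.mul_mul_conjTranspose_same Hᵀ
    rwa [hHtc] at this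
  have hPinv : P * P⁻¹ = 1 := Matrix.mul_nonsing_inv P (isUnit_iff_ne_zero.mpr (ne_of_gt hP.det_pos))
  have hSinv : S⁻¹ * S = 1 := Matrix.nonsing_inv_mul S (isUnit_iff_ne_zero.mpr (ne_of_gt hSpd.det_pos))
  have hRinv' : R * R⁻¹ = 1 := Matrix.mul_nonsing_inv R (isUnit_iff_ne_zero.mpr (ne_of_gt hR.det_pos))
  -- key identity
  have e4 : S⁻¹ * (H * (P * (Hᵀ * (R⁻¹ * H)))) = R⁻¹ * H - S⁻¹ * H := by
    have h1 : H * (P * (Hᵀ * (R⁻¹ * H))) = (S - R) * (R⁻¹ * H) := by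
      rw [hS]
      simp only [add_sub_cancel_right, Matrix.mul_assoc]
    rw [h1, ← Matrix.mul_assoc, Matrix.mul_sub, hSinv, Matrix.sub_mul, Matrix.one_mul,
      Matrix.mul_assoc S⁻¹ R, ← Matrix.mul_assoc R R⁻¹, hRinv', Matrix.one_mul]
  have key : ((1 - K * H) * P) * (P⁻¹ + Hᵀ * R⁻¹ * H) = 1 := by
    subst hK
    simp only [Matrix.sub_mul, Matrix.one_mul, Matrix.mul_add, Matrix.mul_assoc, hPinv,
      Matrix.mul_one]
    rw [e4, Matrix.mul_sub, Matrix.mul_sub]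
    abel
  have hinv : (P⁻¹ + Hᵀ * R⁻¹ * H)⁻¹ = (1 - K * H) * P := Matrix.inv_eq_left_inv key
  rw [← hinv]
  exact hN.inv
end

section
/- Let n, m be positive integers and fix t₀ ∈ ℝ. Let F, H, R be matrix-valued functions of t (n×n, m×n, and m×m respectively) with R(t₀) invertible, let η : ℝ → ℝ be differentiable at t₀ with η(t₀) ≠ 0, and let J : ℝ → (n×n real matrices) be such that J(t) is invertible in a neighborhood of t₀ and J has derivative −F(t₀)ᵀ J(t₀) − J(t₀) F(t₀) − η(t₀) J(t₀) + η(t₀) H(t₀)ᵀ R(t₀)⁻¹ H(t₀) at t₀. Define P(t) := η(t) · J(t)⁻¹. Then P has derivative F(t₀) P(t₀) + P(t₀) F(t₀)ᵀ + Q − P(t₀) H(t₀)ᵀ R(t₀)⁻¹ H(t₀) P(t₀) at t₀, where Q := (η(t₀) + η'(t₀)/η(t₀)) P(t₀). -/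
open Matrix Filter

lemma det_diffAt {n : ℕ} (M : ℝ → Matrix (Fin n) (Fin n) ℝ) (t₀ : ℝ)
    (hM : ∀ i j, DifferentiableAt ℝ (fun t => M t i j) t₀) :
    DifferentiableAt ℝ (fun t => (M t).det) t₀ := by
  simp only [Matrix.det_apply']
  exact DifferentiableAt.fun_sum fun σ _ =>
    ((DifferentiableAt.fun_finsetProd (fun i _ => hM (σ i) i)).const_mul _)

lemma inv_diffAt {n : ℕ} (M : ℝ → Matrix (Fin n) (Fin n) ℝ) (t₀ : ℝ)
    (hM : ∀ i j, DifferentiableAt ℝ (fun t => M t i j) t₀) (hU : IsUnit (M t₀)) :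
    ∀ i j, DifferentiableAt ℝ (fun t => (M t)⁻¹ i j) t₀ := by
  intro i j
  have hdet : (M t₀).det ≠ 0 :=
    ((Matrix.isUnit_iff_isUnit_det _).mp hU).ne_zero
  have h1 : DifferentiableAt ℝ (fun t => ((M t).det)⁻¹) t₀ :=
    (det_diffAt M t₀ hM).inv hdet
  have h2 : DifferentiableAt ℝ (fun t => (M t).adjugate i j) t₀ := by
    simp only [Matrix.adjugate_apply]
    refine det_diffAt _ t₀ ?_
    intro k l
    simp only [Matrix.updateRow_apply]
    by_cases hk : k = j
    · simp [hk]
    · simp only [hk, if_false]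
      exact hM k l
  have heq : (fun t => (M t)⁻¹ i j) = fun t => ((M t).det)⁻¹ * (M t).adjugate i j := by
    funext t
    rw [Matrix.inv_def]
    simp [Ring.inverse_eq_inv', Matrix.smul_apply, smul_eq_mul]
  rw [heq]
  exact h1.mul h2

lemma mul_hasDerivAt {n p q : ℕ} (A : ℝ → Matrix (Fin n) (Fin p) ℝ)
    (B : ℝ → Matrix (Fin p) (Fin q) ℝ) (A' : Matrix (Fin n) (Fin p) ℝ)
    (B' : Matrix (Fin p) (Fin q) ℝ) (t₀ : ℝ)
    (hA : ∀ i j, HasDerivAt (fun t => A t i j) (A' i j) t₀)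
    (hB : ∀ i j, HasDerivAt (fun t => B t i j) (B' i j) t₀) :
    ∀ i j, HasDerivAt (fun t => (A t * B t) i j)
      ((A' * B t₀ + A t₀ * B') i j) t₀ := by
  intro i j
  simp only [Matrix.mul_apply, Matrix.add_apply]
  rw [← Finset.sum_add_distrib]
  exact HasDerivAt.fun_sum fun k _ => ((hA i k).mul (hB k j))

lemma key {n : ℕ} (J₀ K₀ Fm S : Matrix (Fin n) (Fin n) ℝ) (η₀ η' : ℝ) (hη₀ : η₀ ≠ 0)
    (hKJ : K₀ * J₀ = 1) (hJK : J₀ * K₀ = 1) :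
    η' • K₀ + η₀ • (-(K₀ * (-Fmᵀ * J₀ - J₀ * Fm - η₀ • J₀ + η₀ • S) * K₀)) =
    Fm * (η₀ • K₀) + (η₀ • K₀) * Fmᵀ + (η₀ + η' / η₀) • (η₀ • K₀)
      - (η₀ • K₀) * S * (η₀ • K₀) := by
  have h1 : K₀ * (Fmᵀ * J₀) * K₀ = K₀ * Fmᵀ := by
    rw [Matrix.mul_assoc K₀, Matrix.mul_assoc Fmᵀ, hJK, Matrix.mul_one]
  have h2 : K₀ * (J₀ * Fm) * K₀ = Fm * K₀ := by
    rw [← Matrix.mul_assoc, hKJ, Matrix.one_mul]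
  have h3 : K₀ * J₀ * K₀ = K₀ := by rw [hKJ, Matrix.one_mul]
  simp only [Matrix.neg_mul, Matrix.mul_neg, Matrix.mul_sub, Matrix.sub_mul,
    Matrix.mul_add, Matrix.add_mul, Matrix.mul_smul, Matrix.smul_mul, Matrix.mul_assoc] at *
  rw [h1, h2, h3]
  match_scalars <;> (field_simp; try ring)


/-- The core continuous-time computation: if the Fisher matrix `J(t)` (expressed in the
chart of the current state) evolves by the transport term `-FᵀJ - JF` plus the
natural-gradient update `-ηJ + η HᵀR⁻¹H`, then `P = η J⁻¹` satisfies the Kalman–Bucy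
Riccati equation `Ṗ = F P + P Fᵀ + Q - P HᵀR⁻¹H P` with fading-memory process noise
`Q = (η + η̇/η) P`. (Derivatives of matrix-valued functions are taken entrywise.) -/
theorem natural_gradient_fisher_gives_kalman_bucy_riccati
    (n m : ℕ) (hn : 0 < n) (hm : 0 < m) (t₀ : ℝ)
    (F : ℝ → Matrix (Fin n) (Fin n) ℝ)
    (H : ℝ → Matrix (Fin m) (Fin n) ℝ)
    (R : ℝ → Matrix (Fin m) (Fin m) ℝ) (hR : IsUnit (R t₀))
    (η : ℝ → ℝ) (hη : DifferentiableAt ℝ η t₀) (hη0 : η t₀ ≠ 0)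
    (J : ℝ → Matrix (Fin n) (Fin n) ℝ)
    (hJinv : ∀ᶠ t in nhds t₀, IsUnit (J t))
    (hJ : ∀ i j, HasDerivAt (fun t => J t i j)
      ((-(F t₀)ᵀ * J t₀ - J t₀ * F t₀ - η t₀ • J t₀
          + η t₀ • ((H t₀)ᵀ * (R t₀)⁻¹ * H t₀)) i j) t₀)
    (P : ℝ → Matrix (Fin n) (Fin n) ℝ) (hP : P = fun t => η t • (J t)⁻¹)
    (Q : Matrix (Fin n) (Fin n) ℝ) (hQ : Q = (η t₀ + deriv η t₀ / η t₀) • P t₀) :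
    ∀ i j, HasDerivAt (fun t => P t i j)
      ((F t₀ * P t₀ + P t₀ * (F t₀)ᵀ + Q
          - P t₀ * (H t₀)ᵀ * (R t₀)⁻¹ * H t₀ * P t₀) i j) t₀ := by
  set J' : Matrix (Fin n) (Fin n) ℝ :=
    -(F t₀)ᵀ * J t₀ - J t₀ * F t₀ - η t₀ • J t₀
      + η t₀ • ((H t₀)ᵀ * (R t₀)⁻¹ * H t₀) with hJ'def
  have hJU : IsUnit (J t₀) := hJinv.self_of_nhds
  have hJdetU : IsUnit (J t₀).det := (Matrix.isUnit_iff_isUnit_det _).mp hJU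
  set K : ℝ → Matrix (Fin n) (Fin n) ℝ := fun t => (J t)⁻¹ with hKdef
  have hKdiff : ∀ i j, DifferentiableAt ℝ (fun t => K t i j) t₀ :=
    inv_diffAt J t₀ (fun i j => (hJ i j).differentiableAt) hJU
  set K' : Matrix (Fin n) (Fin n) ℝ :=
    Matrix.of fun i j => deriv (fun t => K t i j) t₀ with hK'def
  have hK : ∀ i j, HasDerivAt (fun t => K t i j) (K' i j) t₀ :=
    fun i j => (hKdiff i j).hasDerivAt
  -- derivative of K * J is zero
  have hKJ : ∀ i j, HasDerivAt (fun t => (K t * J t) i j)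
      ((K' * J t₀ + K t₀ * J') i j) t₀ := mul_hasDerivAt K J K' J' t₀ hK hJ
  have hone : ∀ i j, HasDerivAt (fun t => (K t * J t) i j) 0 t₀ := by
    intro i j
    refine HasDerivAt.congr_of_eventuallyEq (hasDerivAt_const t₀ ((1 : Matrix (Fin n) (Fin n) ℝ) i j)) ?_
    filter_upwards [hJinv] with t ht
    rw [Matrix.nonsing_inv_mul _ ((Matrix.isUnit_iff_isUnit_det _).mp ht)]
  have hzero : K' * J t₀ + K t₀ * J' = 0 := by
    ext i j
    have := ((hKJ i j).unique (hone i j))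
    simpa using this
  have hKJ1 : K t₀ * J t₀ = 1 := Matrix.nonsing_inv_mul _ hJdetU
  have hJK1 : J t₀ * K t₀ = 1 := Matrix.mul_nonsing_inv _ hJdetU
  have hK'eq : K' = -(K t₀ * J' * K t₀) := by
    have h : K' * J t₀ = -(K t₀ * J') := eq_neg_of_add_eq_zero_left hzero
    calc K' = K' * (J t₀ * K t₀) := by rw [hJK1, Matrix.mul_one]
      _ = (K' * J t₀) * K t₀ := by rw [Matrix.mul_assoc]
      _ = -(K t₀ * J') * K t₀ := by rw [h]
      _ = -(K t₀ * J' * K t₀) := by rw [Matrix.neg_mul]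
  intro i j
  have hPentry : ∀ t, P t i j = η t * K t i j := by
    intro t; rw [hP]; simp [Matrix.smul_apply, smul_eq_mul, hKdef]
  have hderiv : HasDerivAt (fun t => P t i j)
      (deriv η t₀ * K t₀ i j + η t₀ * K' i j) t₀ := by
    simp only [hPentry]
    exact (hη.hasDerivAt).mul (hK i j)
  convert hderiv using 1
  have : (deriv η t₀ * K t₀ i j + η t₀ * K' i j)
      = (deriv η t₀ • K t₀ + η t₀ • K') i j := by
    simp [Matrix.add_apply, Matrix.smul_apply, smul_eq_mul]
  rw [this, hK'eq, hJ'def]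
  have hkey := key (J t₀) (K t₀) (F t₀) ((H t₀)ᵀ * (R t₀)⁻¹ * H t₀)
    (η t₀) (deriv η t₀) hη0 hKJ1 hJK1
  rw [hkey]
  have hP0 : P t₀ = η t₀ • K t₀ := by rw [hP]
  rw [hQ, hP0]
  congr 1
  simp only [Matrix.mul_assoc]
end

section
/- Let P be an n×n real symmetric positive definite matrix, R an m×m real symmetric positive definite matrix, H an m×n real matrix, s₀ ∈ ℝⁿ, ŷ ∈ ℝᵐ, and y ∈ ℝᵐ. Define the Kalman observation step: K := P Hᵀ (H P Hᵀ + R)⁻¹, P₊ := (I − K H) P, s₊ := s₀ + K (y − ŷ). Then P₊ = (P⁻¹ + Hᵀ R⁻¹ H)⁻¹ and s₊ = s₀ + P₊ Hᵀ R⁻¹ (y − ŷ). -/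
open Matrix

/-- Reformulation of the Kalman observation step: the posterior covariance update is
additive on inverse covariances, and the state update is a gradient step on the
observation log-likelihood preconditioned by the posterior covariance. -/
theorem kalman_observation_step_reformulation
    (n m : ℕ) (P : Matrix (Fin n) (Fin n) ℝ) (hP : P.PosDef)
    (R : Matrix (Fin m) (Fin m) ℝ) (hR : R.PosDef)
    (H : Matrix (Fin m) (Fin n) ℝ)
    (s₀ : Fin n → ℝ) (yhat y : Fin m → ℝ)
    (K : Matrix (Fin n) (Fin m) ℝ) (hK : K = P * Hᵀ * (H * P * Hᵀ + R)⁻¹)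
    (Pplus : Matrix (Fin n) (Fin n) ℝ) (hPplus : Pplus = (1 - K * H) * P)
    (splus : Fin n → ℝ) (hsplus : splus = s₀ + K.mulVec (y - yhat)) :
    Pplus = (P⁻¹ + Hᵀ * R⁻¹ * H)⁻¹ ∧
      splus = s₀ + (Pplus * Hᵀ * R⁻¹).mulVec (y - yhat) := by
  have hT : Hᵀ = Hᴴ := by
    ext i j; simp [conjTranspose_apply]
  -- S := H P Hᵀ + R is positive definite
  have hSemi : (H * P * Hᵀ).PosSemidef := by
    rw [hT]; exact hP.posSemidef.mul_mul_conjTranspose_same H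
  have hS : (H * P * Hᵀ + R).PosDef := Matrix.PosDef.posSemidef_add hSemi hR
  -- basic inverse identities
  have hSinv : (H * P * Hᵀ + R)⁻¹ * (H * P * Hᵀ + R) = 1 :=
    Matrix.nonsing_inv_mul _ ((isUnit_iff_isUnit_det _).mp hS.isUnit)
  have hRinv : R * R⁻¹ = 1 :=
    Matrix.mul_nonsing_inv _ ((isUnit_iff_isUnit_det _).mp hR.isUnit)
  have hPinv : P * P⁻¹ = 1 :=
    Matrix.mul_nonsing_inv _ ((isUnit_iff_isUnit_det _).mp hP.isUnit)
  -- key identity: K * (H P Hᵀ + R) = P Hᵀ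
  have hKS : K * (H * P * Hᵀ + R) = P * Hᵀ := by
    rw [hK, Matrix.mul_assoc, hSinv, Matrix.mul_one]
  have hKH : K * (H * P * Hᵀ) = P * Hᵀ - K * R := by
    rw [Matrix.mul_add] at hKS
    exact eq_sub_of_add_eq hKS
  have hKey : K * H * P * Hᵀ * R⁻¹ = P * Hᵀ * R⁻¹ - K := by
    calc K * H * P * Hᵀ * R⁻¹ = (K * (H * P * Hᵀ)) * R⁻¹ := by
          simp only [Matrix.mul_assoc]
      _ = (P * Hᵀ - K * R) * R⁻¹ := by rw [hKH]
      _ = P * Hᵀ * R⁻¹ - K * (R * R⁻¹) := by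
          simp only [Matrix.sub_mul, Matrix.mul_assoc]
      _ = P * Hᵀ * R⁻¹ - K := by rw [hRinv, Matrix.mul_one]
  -- the gain in terms of the posterior covariance
  have hK2 : Pplus * Hᵀ * R⁻¹ = K := by
    calc Pplus * Hᵀ * R⁻¹ = (1 - K * H) * P * Hᵀ * R⁻¹ := by rw [hPplus]
      _ = P * Hᵀ * R⁻¹ - K * H * P * Hᵀ * R⁻¹ := by
          simp only [Matrix.sub_mul, Matrix.one_mul]
      _ = K := by rw [hKey]; abel
  -- Pplus is a left inverse of P⁻¹ + Hᵀ R⁻¹ H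
  have hPA : Pplus * (P⁻¹ + Hᵀ * R⁻¹ * H) = 1 := by
    have h1 : Pplus * P⁻¹ = 1 - K * H := by
      rw [hPplus, Matrix.mul_assoc, hPinv, Matrix.mul_one]
    have h2 : Pplus * (Hᵀ * R⁻¹ * H) = K * H := by
      calc Pplus * (Hᵀ * R⁻¹ * H) = (Pplus * Hᵀ * R⁻¹) * H := by
            simp only [Matrix.mul_assoc]
        _ = K * H := by rw [hK2]
    rw [Matrix.mul_add, h1, h2]
    abel
  refine ⟨(Matrix.inv_eq_left_inv hPA).symm, ?_⟩
  rw [hK2, hsplus]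
end

section
/- Let P be an n×n real symmetric positive definite matrix, F an invertible n×n real matrix, R an m×m real symmetric positive definite matrix, H an m×n real matrix, α ≥ 0 a real number, and η_prev, η positive reals with 1/η = 1/((1+α) η_prev) + 1. Define P_pred := (1+α) F P Fᵀ, P₊ := (P_pred⁻¹ + Hᵀ R⁻¹ H)⁻¹, J := η_prev P⁻¹, and J₊ := (1−η) (F⁻¹)ᵀ J F⁻¹ + η Hᵀ R⁻¹ H. Then all the inverses involved exist (in particular P_pred and P_pred⁻¹ + Hᵀ R⁻¹ H are symmetric positive definite) and J₊ = η P₊⁻¹; equivalently P₊ = η J₊⁻¹. -/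
open Matrix

lemma posDef_smul_aux {n : ℕ} {M : Matrix (Fin n) (Fin n) ℝ} (hM : M.PosDef)
    {c : ℝ} (hc : 0 < c) : (c • M).PosDef := by
  refine Matrix.PosDef.of_dotProduct_mulVec_pos (show (c • M)ᴴ = c • M by rw [conjTranspose_smul, star_trivial, hM.1.eq]) fun x hx => ?_
  rw [smul_mulVec, dotProduct_smul, smul_eq_mul]
  exact mul_pos hc (hM.dotProduct_mulVec_pos hx)

lemma posDef_conjTranspose_mul_mul_aux {n : ℕ} {A : Matrix (Fin n) (Fin n) ℝ}
    (hA : A.PosDef) (B : Matrix (Fin n) (Fin n) ℝ) (hB : IsUnit B) :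
    (Bᴴ * A * B).PosDef := by
  refine Matrix.PosDef.of_dotProduct_mulVec_pos (isHermitian_conjTranspose_mul_mul B hA.1) fun x hx => ?_
  have hx' : B *ᵥ x ≠ 0 := by
    intro h
    exact hx (Matrix.mulVec_injective_iff_isUnit.mpr hB
      (h.trans (Matrix.mulVec_zero B).symm))
  simpa only [star_mulVec, dotProduct_mulVec, vecMul_vecMul] using hA.dotProduct_mulVec_pos hx'

/-- The key covariance computation: the proportionality `P = η J⁻¹` between the Kalman
covariance and the inverse Fisher matrix propagates through one step of the pure
fading-memory extended Kalman filter / online natural gradient. -/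
theorem covariance_fisher_proportionality_step
    (n m : ℕ) (P : Matrix (Fin n) (Fin n) ℝ) (hP : P.PosDef)
    (F : Matrix (Fin n) (Fin n) ℝ) (hF : IsUnit F)
    (R : Matrix (Fin m) (Fin m) ℝ) (hR : R.PosDef)
    (H : Matrix (Fin m) (Fin n) ℝ)
    (α : ℝ) (hα : 0 ≤ α)
    (ηprev η : ℝ) (hηprev : 0 < ηprev) (hη : 0 < η)
    (hηrec : 1 / η = 1 / ((1 + α) * ηprev) + 1)
    (Ppred : Matrix (Fin n) (Fin n) ℝ) (hPpred : Ppred = (1 + α) • (F * P * Fᵀ))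
    (Pplus : Matrix (Fin n) (Fin n) ℝ) (hPplus : Pplus = (Ppred⁻¹ + Hᵀ * R⁻¹ * H)⁻¹)
    (J : Matrix (Fin n) (Fin n) ℝ) (hJ : J = ηprev • P⁻¹)
    (Jplus : Matrix (Fin n) (Fin n) ℝ)
    (hJplus : Jplus = (1 - η) • ((F⁻¹)ᵀ * J * F⁻¹) + η • (Hᵀ * R⁻¹ * H)) :
    Ppred.PosDef ∧ (Ppred⁻¹ + Hᵀ * R⁻¹ * H).PosDef ∧
      IsUnit Ppred ∧ IsUnit (Ppred⁻¹ + Hᵀ * R⁻¹ * H) ∧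
      Jplus = η • Pplus⁻¹ ∧ Pplus = η • Jplus⁻¹ := by
  have h1α : (0 : ℝ) < 1 + α := by linarith
  have hFT : IsUnit Fᵀ := (Matrix.isUnit_transpose F).mpr hF
  have hHerm : Fᵀᴴ = F := by
    rw [conjTranspose_eq_transpose_of_trivial, transpose_transpose]
  -- F P Fᵀ is positive definite
  have hFPF : (F * P * Fᵀ).PosDef := by
    have h := posDef_conjTranspose_mul_mul_aux hP Fᵀ hFT
    rwa [hHerm] at h
  have hPpredPD : Ppred.PosDef := hPpred ▸ posDef_smul_aux hFPF h1α
  -- Hᵀ R⁻¹ H is positive semidefinite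
  have hS : (Hᵀ * R⁻¹ * H).PosSemidef := by
    have h := hR.inv.posSemidef.conjTranspose_mul_mul_same H
    rwa [conjTranspose_eq_transpose_of_trivial] at h
  have hSumPD : (Ppred⁻¹ + Hᵀ * R⁻¹ * H).PosDef := hPpredPD.inv.add_posSemidef hS
  refine ⟨hPpredPD, hSumPD, hPpredPD.isUnit, hSumPD.isUnit, ?_⟩
  -- Pplus⁻¹ = Ppred⁻¹ + Hᵀ R⁻¹ H
  have hPplusInv : Pplus⁻¹ = Ppred⁻¹ + Hᵀ * R⁻¹ * H := by
    rw [hPplus, Matrix.nonsing_inv_nonsing_inv _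
      ((Matrix.isUnit_iff_isUnit_det _).mp hSumPD.isUnit)]
  -- compute Ppred⁻¹
  have : Invertible (1 + α) := invertibleOfNonzero h1α.ne'
  have hPpredInv : Ppred⁻¹ = (1 + α)⁻¹ • ((F⁻¹)ᵀ * P⁻¹ * F⁻¹) := by
    rw [hPpred, Matrix.inv_smul (A := F * P * Fᵀ) (1 + α) ((Matrix.isUnit_iff_isUnit_det _).mp hFPF.isUnit),
      invOf_eq_inv (1 + α), Matrix.mul_inv_rev, Matrix.mul_inv_rev,
      ← Matrix.transpose_nonsing_inv, Matrix.mul_assoc]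
  -- scalar identity
  have hscal : (1 - η) * ηprev = η * (1 + α)⁻¹ := by
    have hη' : η ≠ 0 := hη.ne'
    have hηp' : ηprev ≠ 0 := hηprev.ne'
    field_simp at hηrec ⊢
    nlinarith [hηrec]
  have key : Jplus = η • Pplus⁻¹ := by
    rw [hJplus, hJ, hPplusInv, hPpredInv, smul_add, ← smul_assoc]
    congr 1
    rw [Matrix.mul_smul, Matrix.smul_mul, smul_smul, hscal, smul_eq_mul]
  refine ⟨key, ?_⟩
  -- Pplus = η • Jplus⁻¹
  have hPplusIsUnit : IsUnit Pplus⁻¹.det := by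
    rw [hPplusInv]; exact (Matrix.isUnit_iff_isUnit_det _).mp hSumPD.isUnit
  have : Invertible η := invertibleOfNonzero hη.ne'
  have hPplusPD : Pplus.PosDef := hPplus ▸ hSumPD.inv
  rw [key, Matrix.inv_smul (A := Pplus⁻¹) η hPplusIsUnit, invOf_eq_inv η,
    Matrix.nonsing_inv_nonsing_inv _ ((Matrix.isUnit_iff_isUnit_det _).mp hPplusPD.isUnit),
    smul_smul, mul_inv_cancel₀ hη.ne', one_smul]
end
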